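/- Let H be a Hilbert space, K a closed subspace with orthogonal projection P, and {e_j} an orthonormal basis of H. Then the sequences f_j := e_j and g_j := P(e_j) - (1 - P)(e_j) = (2P - 1)(e_j) are both orthonormal bases of H, and P(e_j) = (1/2)(f_j + g_j) for every j. -/

import Mathlib

open scoped InnerProductSpace

/-- For a closed subspace `K` (with orthogonal projection `P`) of a Hilbert space and an
orthonormal basis `{e_j}`, the sequences `f_j := e_j` and `g_j := (2P - 1)(e_j)` are both
orthonormal bases and `P(e_j) = (1/2)(f_j + g_j)`. -/
theorem stmt8 {H : Type*} [NormedAddCommGroup H] [InnerProductSpace ℂ H] [CompleteSpace H]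
    (K : Submodule ℂ H) [CompleteSpace K] (e : HilbertBasis ℕ ℂ H) :
    ∃ f g : HilbertBasis ℕ ℂ H,
      (∀ j, f j = e j) ∧
      (∀ j, g j = ((2 • (K.subtypeL.comp K.orthogonalProjection) - 1 : H →L[ℂ] H) (e j))) ∧
      (∀ j, K.subtypeL.comp K.orthogonalProjection (e j) = (1 / 2 : ℂ) • (f j + g j)) := by
  classical
  refine ⟨e, ⟨(K.reflection.symm.trans e.repr : H ≃ₗᵢ[ℂ] _)⟩, fun j => rfl, ?_, ?_⟩
  · intro j
    have h1 : (⟨(K.reflection.symm.trans e.repr : H ≃ₗᵢ[ℂ] _)⟩ : HilbertBasis ℕ ℂ H) j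
        = K.reflection (e j) := by
      simp [HilbertBasis.coe_mk]
      simp only [← HilbertBasis.repr_symm_single, LinearIsometryEquiv.symm_trans,
        LinearIsometryEquiv.trans_apply, LinearIsometryEquiv.symm_apply_apply,
        Submodule.reflection_symm]
    rw [h1, Submodule.reflection_apply, Submodule.starProjection_apply]
    simp [ContinuousLinearMap.smul_apply, two_smul]
  · intro j
    have h1 : (⟨(K.reflection.symm.trans e.repr : H ≃ₗᵢ[ℂ] _)⟩ : HilbertBasis ℕ ℂ H) j
        = K.reflection (e j) := by
      simp [HilbertBasis.coe_mk]
      simp only [← HilbertBasis.repr_symm_single, LinearIsometryEquiv.symm_trans,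
        LinearIsometryEquiv.trans_apply, LinearIsometryEquiv.symm_apply_apply,
        Submodule.reflection_symm]
    rw [h1, Submodule.reflection_apply, Submodule.starProjection_apply]
    have : e j + (2 • (↑(K.orthogonalProjection (e j)) : H) - e j)
        = 2 • (↑(K.orthogonalProjection (e j)) : H) := by abel
    rw [this]
    rw [two_smul, smul_add, ← add_smul]
    norm_num
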